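/- Consider the polytope P ⊆ [0,1]^7 in variables (z1,z2,z3,z4,z5,w1,w2) defined by the equalities z1+z3+z4=1, z1+z3+z5=1, z1+z2=1 and inequalities w1 ≥ z4, w1 ≥ z3, w2 ≥ z4, together with 0 ≤ z,w ≤ 1. Then the point (z1,z2,z3,z4,z5,w1,w2) = (0,1,1/2,1/2,1/2,1/2,1/2) is an extreme point of P, and it is not integral. -/

import Mathlib

/-- The polytope of the naive LP relaxation (IP1) for the two-level example tree:
coordinates `(z₁, z₂, z₃, z₄, z₅, w₁, w₂) = (x 0, …, x 6)`. -/
def naivePruningPolytope : Set (Fin 7 → ℝ) :=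
  {x | x 0 + x 2 + x 3 = 1 ∧ x 0 + x 2 + x 4 = 1 ∧ x 0 + x 1 = 1 ∧
       x 3 ≤ x 5 ∧ x 2 ≤ x 5 ∧ x 3 ≤ x 6 ∧
       ∀ i, 0 ≤ x i ∧ x i ≤ 1}

private lemma key_eq {a b u v c : ℝ} (ha : 0 < a) (hb : 0 < b) (hab : a + b = 1)
    (hu : c ≤ u) (hv : c ≤ v) (h : a * u + b * v = c) : u = c ∧ v = c := by
  have h1 : a * (u - c) + b * (v - c) = 0 := by linear_combination h - c * hab
  have h2 : 0 ≤ a * (u - c) := mul_nonneg ha.le (by linarith)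
  have h3 : 0 ≤ b * (v - c) := mul_nonneg hb.le (by linarith)
  have h4 : a * (u - c) = 0 := by linarith
  have h5 : b * (v - c) = 0 := by linarith
  constructor
  · have := (mul_eq_zero.1 h4).resolve_left ha.ne'; linarith
  · have := (mul_eq_zero.1 h5).resolve_left hb.ne'; linarith

/-- The point
`(z₁,z₂,z₃,z₄,z₅,w₁,w₂) = (0, 1, 1/2, 1/2, 1/2, 1/2, 1/2)` is an extreme point of
the naive LP-relaxation polytope, and it is not integral. -/
theorem naive_relaxation_has_fractional_extreme_point :
    (![0, 1, 1/2, 1/2, 1/2, 1/2, 1/2] : Fin 7 → ℝ) ∈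
        Set.extremePoints ℝ naivePruningPolytope ∧
    ¬ ∀ i : Fin 7, ∃ k : ℤ,
        (![0, 1, 1/2, 1/2, 1/2, 1/2, 1/2] : Fin 7 → ℝ) i = (k : ℝ) := by
  constructor
  · constructor
    · refine ⟨by change (0:ℝ) + 1/2 + 1/2 = 1; norm_num, by change (0:ℝ) + 1/2 + 1/2 = 1; norm_num, by norm_num, le_rfl, le_rfl, le_rfl, ?_⟩
      intro i; fin_cases i <;> norm_num
    · rintro y hy z hz ⟨a, b, ha, hb, hab, hsum⟩
      obtain ⟨hy1, hy2, hy3, hy4, hy5, hy6, hyb⟩ := hy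
      obtain ⟨hz1, hz2, hz3, hz4, hz5, hz6, hzb⟩ := hz
      have e : ∀ i, a * y i + b * z i = (![0, 1, 1/2, 1/2, 1/2, 1/2, 1/2] : Fin 7 → ℝ) i := by
        intro i; have := congrFun hsum i; simpa using this
      have e0 : a * y 0 + b * z 0 = 0 := e 0
      have e1 : a * y 1 + b * z 1 = 1 := e 1
      have e2 : a * y 2 + b * z 2 = 1/2 := e 2
      have e3 : a * y 3 + b * z 3 = 1/2 := e 3
      have e4 : a * y 4 + b * z 4 = 1/2 := e 4
      have e5 : a * y 5 + b * z 5 = 1/2 := e 5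
      have e6 : a * y 6 + b * z 6 = 1/2 := e 6
      obtain ⟨hy0, hz0⟩ := key_eq ha hb hab (hyb 0).1 (hzb 0).1 e0
      have hy5' : (1:ℝ)/2 ≤ y 5 := by linarith
      have hz5' : (1:ℝ)/2 ≤ z 5 := by linarith
      obtain ⟨hy5e, hz5e⟩ := key_eq ha hb hab hy5' hz5' e5
      have hy2e : y 2 = 1/2 := by linarith
      have hz2e : z 2 = 1/2 := by linarith
      have hy3e : y 3 = 1/2 := by linarith
      have hz3e : z 3 = 1/2 := by linarith
      have hy4e : y 4 = 1/2 := by linarith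
      have hz4e : z 4 = 1/2 := by linarith
      obtain ⟨hy6e, hz6e⟩ := key_eq ha hb hab (by linarith : (1:ℝ)/2 ≤ y 6)
        (by linarith : (1:ℝ)/2 ≤ z 6) e6
      have hy1e : y 1 = 1 := by linarith
      have hz1e : z 1 = 1 := by linarith
      funext i; fin_cases i
      exacts [hy0, hy1e, hy2e, hy3e, hy4e, hy5e, hy6e]
  · intro h
    obtain ⟨k, hk⟩ := h 2
    have hk' : (k : ℝ) = 1/2 := hk.symm
    have h1 : (0:ℤ) < k := by exact_mod_cast show (0:ℝ) < (k:ℝ) by rw [hk']; norm_num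
    have h2 : (k:ℤ) < 1 := by exact_mod_cast show (k:ℝ) < 1 by rw [hk']; norm_num
    omega
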